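/- Let F be a field, A an n×n matrix over F, p, s, τ natural numbers, λ_1,…,λ_p pairwise distinct nonzero elements of F, and M_{j,i} (1 ≤ j ≤ p, 0 ≤ i < s) n×n matrices over F. Define G(k) := ∑_{j=1}^{p} λ_j^k · ∑_{i=0}^{s−1} C(k,i)·M_{j,i}, and suppose A^k = G(k) for every k ≥ τ. Let t be the least natural number with A^t = G(t) (it exists, since A^τ = G(τ)). Then: (a) A^k = G(k) for every k ≥ t; and (b) t is the least natural number m such that the kernel of the linear map x ↦ A^m·x equals the kernel of x ↦ A^{m+1}·x (i.e., t is the index of A). -/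

import Mathlib

open Finset

section PGaux

open Polynomial

variable {F : Type*} [Field F]

/-- Shift operator on sequences valued in a module. -/
noncomputable def pgShift (F : Type*) [Field F] (V : Type*) [AddCommGroup V] [Module F V] :
    Module.End F (ℕ → V) where
  toFun f := fun k => f (k + 1)
  map_add' _ _ := rfl
  map_smul' _ _ := rfl

variable {V : Type*} [AddCommGroup V] [Module F V]

lemma pgShift_pow_apply (i : ℕ) (f : ℕ → V) (k : ℕ) :
    ((pgShift F V ^ i) f) k = f (k + i) := by
  induction i generalizing f k with
  | zero => rfl
  | succ i ih =>
    rw [pow_succ, Module.End.mul_apply, ih]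
    rfl

lemma pg_aeval_apply (q : F[X]) (f : ℕ → V) (k : ℕ) :
    ((aeval (pgShift F V) q) f) k
      = ∑ i ∈ range (q.natDegree + 1), q.coeff i • f (k + i) := by
  rw [Polynomial.aeval_eq_sum_range, LinearMap.sum_apply, Finset.sum_apply]
  refine Finset.sum_congr rfl fun i _ => ?_
  rw [LinearMap.smul_apply, Pi.smul_apply, pgShift_pow_apply]

/-- The key "annihilation" fact for a single exponential-binomial term. -/
lemma pg_kill (lam : F) (s i : ℕ) (hi : i < s) (Mv : V) :
    (aeval (pgShift F V) ((X - C lam) ^ s))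
      (fun k => (lam ^ k * (k.choose i : F)) • Mv) = 0 := by
  induction s generalizing i with
  | zero => omega
  | succ s ihs =>
    rw [pow_succ, map_mul, Module.End.mul_apply]
    have hstep : (aeval (pgShift F V) (X - C lam))
        (fun k => (lam ^ k * (k.choose i : F)) • Mv)
        = fun k => (lam ^ (k+1) * ((k+1).choose i - (k.choose i : F))) • Mv := by
      rw [map_sub, aeval_X, aeval_C]
      funext k
      show (lam ^ (k+1) * ((k+1).choose i : F)) • Mv
          - lam • (lam ^ k * (k.choose i : F)) • Mv = _
      rw [smul_smul, ← sub_smul]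
      congr 1
      ring
    rw [hstep]
    rcases Nat.eq_zero_or_pos i with rfl | hpos
    · have : (fun k => (lam ^ (k+1) * (((k+1).choose 0 : F) - (k.choose 0 : F))) • Mv)
          = (0 : ℕ → V) := by
        funext k; simp
      rw [this, map_zero]
    · obtain ⟨i', rfl⟩ := Nat.exists_eq_add_of_le hpos
      have : (fun k => (lam ^ (k+1) * (((k+1).choose (1+i') : F) - (k.choose (1+i') : F))) • Mv)
          = lam • fun k => (lam ^ k * (k.choose i' : F)) • Mv := by
        funext k
        rw [Pi.smul_apply, smul_smul]
        congr 1
        rw [add_comm 1 i', Nat.choose_succ_succ' k i']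
        push_cast
        ring
      rw [this, map_smul, ihs i' (by omega), smul_zero]

/-- Downward propagation of vanishing along a recurrence with nonzero constant term. -/
lemma pg_down (c : ℕ → F) (d : ℕ) (hc : c 0 ≠ 0) (f : ℕ → V) (B K : ℕ)
    (hrec : ∀ k, B ≤ k → ∑ i ∈ range (d + 1), c i • f (k + i) = 0)
    (hvan : ∀ k, K ≤ k → f k = 0) :
    ∀ k, B ≤ k → f k = 0 := by
  have H : ∀ m k, B ≤ k → K - k ≤ m → f k = 0 := by
    intro m
    induction m with
    | zero => intro k hk h0; exact hvan k (by omega)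
    | succ m ih =>
      intro k hk hm
      by_cases hK : K ≤ k
      · exact hvan k hK
      · have hrec' := hrec k hk
        rw [Finset.sum_eq_single 0 (fun i _ hi => by
            rw [ih (k + i) (by omega) (by omega), smul_zero]) (by simp)] at hrec'
        rw [add_zero] at hrec'
        exact (smul_eq_zero.mp hrec').resolve_left hc
  intro k hk
  exact H (K - k) k hk le_rfl

variable {n : Type*} [Fintype n] [DecidableEq n]

lemma pg_aeval_pow (A : Matrix n n F) (q : F[X]) :
    (aeval (pgShift F (Matrix n n F)) q) (fun k => A ^ k)
      = fun k => A ^ k * (aeval A q) := by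
  induction q using Polynomial.induction_on' with
  | add p r hp hr =>
    rw [map_add, map_add, LinearMap.add_apply, hp, hr]
    funext k
    rw [Pi.add_apply, mul_add]
  | monomial i a =>
    rw [aeval_monomial, aeval_monomial, Module.End.mul_apply]
    funext k
    rw [Module.algebraMap_end_apply, Pi.smul_apply, pgShift_pow_apply]
    rw [Algebra.algebraMap_eq_smul_one, smul_mul_assoc, one_mul, mul_smul_comm, ← pow_add]

lemma pg_aeval_G {p : ℕ} (lam : Fin p → F) (s : ℕ) (M : Fin p → ℕ → Matrix n n F) :
    (aeval (pgShift F (Matrix n n F)) (∏ j : Fin p, (X - C (lam j)) ^ s))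
      (fun k => ∑ j : Fin p, lam j ^ k • ∑ i ∈ range s, (k.choose i : F) • M j i) = 0 := by
  have hfun : (fun k => ∑ j : Fin p, lam j ^ k • ∑ i ∈ range s, (k.choose i : F) • M j i)
      = ∑ j : Fin p, fun k => lam j ^ k • ∑ i ∈ range s, (k.choose i : F) • M j i := by
    funext k; rw [Finset.sum_apply]
  rw [hfun, map_sum]
  refine Finset.sum_eq_zero fun j _ => ?_
  have hq : (∏ j' : Fin p, (X - C (lam j')) ^ s)
      = (∏ j' ∈ Finset.univ.erase j, (X - C (lam j')) ^ s) * (X - C (lam j)) ^ s :=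
    (Finset.prod_erase_mul _ _ (Finset.mem_univ j)).symm
  rw [hq, map_mul, Module.End.mul_apply]
  have hg : (fun k => lam j ^ k • ∑ i ∈ range s, (k.choose i : F) • M j i)
      = ∑ i ∈ range s, fun k => (lam j ^ k * (k.choose i : F)) • M j i := by
    funext k
    rw [Finset.sum_apply, Finset.smul_sum]
    refine Finset.sum_congr rfl fun i _ => ?_
    rw [smul_smul]
  rw [hg, map_sum]
  have : ∑ i ∈ range s, (aeval (pgShift F (Matrix n n F)) ((X - C (lam j)) ^ s))
      (fun k => (lam j ^ k * (k.choose i : F)) • M j i) = 0 :=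
    Finset.sum_eq_zero fun i hi => pg_kill (lam j) s i (Finset.mem_range.mp hi) (M j i)
  rw [this, map_zero]

lemma pg_sum_mulVec {ι : Type*} (t : Finset ι) (B : ι → Matrix n n F) (x : n → F) :
    (∑ i ∈ t, B i).mulVec x = ∑ i ∈ t, (B i).mulVec x := by
  classical
  induction t using Finset.induction_on with
  | empty => simp [Matrix.zero_mulVec]
  | insert _ _ h ih => rw [Finset.sum_insert h, Finset.sum_insert h, Matrix.add_mulVec, ih]

end PGaux

/-- If `A^k` agrees with a purely geometric sequence `G(k)` for all `k ≥ τ`, and `t` is the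
least natural number with `A^t = G(t)`, then `A^k = G(k)` for all `k ≥ t`, and `t` is the
index of `A`, i.e. the least `m` with `ker(A^m) = ker(A^{m+1})`. -/
theorem purely_geometric_agreement_from_index
    (F : Type*) [Field F] (n : Type*) [Fintype n] [DecidableEq n] [Nonempty n]
    (A : Matrix n n F) (p s τ : ℕ)
    (lam : Fin p → F) (hlam : ∀ j, lam j ≠ 0) (hinj : Function.Injective lam)
    (M : Fin p → ℕ → Matrix n n F)
    (G : ℕ → Matrix n n F)
    (hG : ∀ k : ℕ, G k = ∑ j : Fin p, lam j ^ k •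
        ∑ i ∈ Finset.range s, (k.choose i : F) • M j i)
    (hagree : ∀ k : ℕ, τ ≤ k → A ^ k = G k)
    (t : ℕ) (ht : A ^ t = G t) (htmin : ∀ m : ℕ, A ^ m = G m → t ≤ m) :
    (∀ k : ℕ, t ≤ k → A ^ k = G k) ∧
    (LinearMap.ker (A ^ t).mulVecLin = LinearMap.ker (A ^ (t + 1)).mulVecLin ∧
      ∀ m : ℕ,
        LinearMap.ker (A ^ m).mulVecLin = LinearMap.ker (A ^ (m + 1)).mulVecLin → t ≤ m) := by
  classical
  set q : Polynomial F := ∏ j : Fin p, (Polynomial.X - Polynomial.C (lam j)) ^ s with hqdef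
  set qA : Matrix n n F := Polynomial.aeval A q with hqAdef
  set L : Module.End F (n → F) := A.mulVecLin with hLdef
  set c : ℕ → F := fun i => q.coeff i with hcdef
  set d : ℕ := q.natDegree with hddef
  -- bridge between matrix powers and endomorphism powers
  have hbridge : ∀ k : ℕ, (A ^ k).mulVecLin = L ^ k := by
    intro k
    induction k with
    | zero => rw [pow_zero, pow_zero, Matrix.mulVecLin_one]; rfl
    | succ k ih =>
      rw [pow_succ, pow_succ, Matrix.mulVecLin_mul, ih, ← Module.End.mul_eq_comp]
  -- the constant coefficient of q is nonzero
  have hc0 : c 0 ≠ 0 := by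
    rw [hcdef]
    show q.coeff 0 ≠ 0
    rw [Polynomial.coeff_zero_eq_eval_zero, hqdef, Polynomial.eval_prod]
    refine Finset.prod_ne_zero_iff.mpr fun j _ => ?_
    rw [Polynomial.eval_pow, Polynomial.eval_sub, Polynomial.eval_X, Polynomial.eval_C]
    refine pow_ne_zero _ ?_
    simpa using hlam j
  -- the recurrence satisfied by G
  have hGfun : G = fun k => ∑ j : Fin p, lam j ^ k •
      ∑ i ∈ Finset.range s, (k.choose i : F) • M j i := funext hG
  have hGann : (Polynomial.aeval (pgShift F (Matrix n n F)) q) G = 0 := by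
    rw [hGfun, hqdef]
    exact pg_aeval_G lam s M
  have hGrec : ∀ k, ∑ i ∈ Finset.range (d + 1), c i • G (k + i) = 0 := by
    intro k
    rw [← pg_aeval_apply q G k, hGann]
    rfl
  -- the recurrence satisfied by D k = A^k - G k
  set D : ℕ → Matrix n n F := fun k => A ^ k - G k with hDdef
  have hArec : ∀ k, ∑ i ∈ Finset.range (d + 1), c i • A ^ (k + i) = A ^ k * qA := by
    intro k
    have h1 := pg_aeval_apply q (fun k => A ^ k) k
    rw [pg_aeval_pow A q] at h1
    exact h1.symm
  have hDrec : ∀ k, ∑ i ∈ Finset.range (d + 1), c i • D (k + i) = A ^ k * qA := by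
    intro k
    have hsplit : ∑ i ∈ Finset.range (d + 1), c i • D (k + i)
        = (∑ i ∈ Finset.range (d + 1), c i • A ^ (k + i))
          - ∑ i ∈ Finset.range (d + 1), c i • G (k + i) := by
      rw [← Finset.sum_sub_distrib]
      exact Finset.sum_congr rfl fun i _ => smul_sub _ _ _
    rw [hsplit, hGrec, sub_zero, hArec]
  have hτq : A ^ τ * qA = 0 := by
    rw [← hDrec τ]
    refine Finset.sum_eq_zero fun i _ => ?_
    have : A ^ (τ + i) = G (τ + i) := hagree _ (Nat.le_add_right _ _)
    simp [hDdef, this]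
  -- the index m₀ of A
  have hex : ∃ m, LinearMap.ker (L ^ m) = LinearMap.ker (L ^ (m + 1)) := by
    obtain ⟨k, -, hk⟩ := Module.End.exists_ker_pow_eq_ker_pow_succ L
    exact ⟨k, hk⟩
  set m₀ := Nat.find hex with hm₀def
  have hPm₀ : LinearMap.ker (L ^ m₀) = LinearMap.ker (L ^ (m₀ + 1)) := Nat.find_spec hex
  have hPmin : ∀ m, LinearMap.ker (L ^ m) = LinearMap.ker (L ^ (m + 1)) → m₀ ≤ m :=
    fun m h => Nat.find_le h
  have hstab : ∀ k, m₀ ≤ k → LinearMap.ker (L ^ k) = LinearMap.ker (L ^ m₀) := by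
    intro k hk
    rw [show k = m₀ + (k - m₀) by omega]
    exact (Module.End.ker_pow_constant hPm₀ _).symm
  have hmono : ∀ a b : ℕ, a ≤ b → LinearMap.ker (L ^ a) ≤ LinearMap.ker (L ^ b) := by
    intro a b hab x hx
    rw [LinearMap.mem_ker] at hx ⊢
    rw [show b = (b - a) + a by omega, pow_add, Module.End.mul_apply, hx, map_zero]
  -- A ^ m₀ * qA = 0
  have hm₀q : A ^ m₀ * qA = 0 := by
    have hNq : A ^ max τ m₀ * qA = 0 := by
      rw [show max τ m₀ = (max τ m₀ - τ) + τ by omega, pow_add, mul_assoc, hτq, mul_zero]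
    have hker : ∀ x : n → F, (L ^ m₀) (qA.mulVec x) = 0 := by
      intro x
      have hx : qA.mulVec x ∈ LinearMap.ker (L ^ max τ m₀) := by
        rw [LinearMap.mem_ker, ← hbridge, Matrix.mulVecLin_apply, Matrix.mulVec_mulVec, hNq,
          Matrix.zero_mulVec]
      rw [hstab _ (le_max_right _ _)] at hx
      exact hx
    have hv : ∀ x : n → F, (A ^ m₀ * qA).mulVec x = 0 := by
      intro x
      rw [← Matrix.mulVec_mulVec, ← Matrix.mulVecLin_apply, hbridge]
      exact hker x
    ext i j
    have := congrFun (hv (Pi.single j 1)) i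
    rw [Matrix.mulVec_single] at this
    simpa using this
  -- A^k = G k for all k ≥ m₀
  have hge : ∀ k, m₀ ≤ k → A ^ k = G k := by
    have h0 := pg_down c d hc0 D m₀ τ
      (fun k hk => by
        obtain ⟨k', rfl⟩ := Nat.exists_eq_add_of_le hk
        rw [hDrec, add_comm m₀ k', pow_add, mul_assoc, hm₀q, mul_zero])
      (fun k hk => sub_eq_zero_of_eq (hagree k hk))
    intro k hk
    exact sub_eq_zero.mp (h0 k hk)
  -- t = m₀
  have htm₀ : t = m₀ := by
    have h1 : t ≤ m₀ := htmin m₀ (hge m₀ le_rfl)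
    have h2 : m₀ ≤ t := by
      by_contra h2
      push_neg at h2
      have hPt : LinearMap.ker (L ^ t) = LinearMap.ker (L ^ (t + 1)) := by
        refine le_antisymm (hmono t (t + 1) (by omega)) ?_
        intro x hx
        have hxk : ∀ k, m₀ ≤ k → (A ^ k).mulVec x = 0 := by
          intro k hk
          have hxm : x ∈ LinearMap.ker (L ^ k) := hmono (t + 1) k (by omega) hx
          rw [LinearMap.mem_ker, ← hbridge, Matrix.mulVecLin_apply] at hxm
          exact hxm
        set v : ℕ → (n → F) := fun k => (G k).mulVec x with hvdef
        have hvrec : ∀ k, 0 ≤ k → ∑ i ∈ Finset.range (d + 1), c i • v (k + i) = 0 := by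
          intro k _
          have h := congrArg (fun B : Matrix n n F => B.mulVec x) (hGrec k)
          simpa [hvdef, pg_sum_mulVec, Matrix.smul_mulVec] using h
        have hvvan : ∀ k, m₀ ≤ k → v k = 0 := by
          intro k hk
          show (G k).mulVec x = 0
          rw [← hge k hk]
          exact hxk k hk
        have hv0 := pg_down c d hc0 v 0 m₀ hvrec hvvan t (Nat.zero_le t)
        rw [LinearMap.mem_ker, ← hbridge, Matrix.mulVecLin_apply, ht]
        exact hv0
      exact absurd (hPmin t hPt) (by omega)
    omega
  refine ⟨fun k hk => hge k (by omega), ?_, ?_⟩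
  · rw [hbridge, hbridge, htm₀]
    exact hPm₀
  · intro m hm
    rw [hbridge, hbridge] at hm
    rw [htm₀]
    exact hPmin m hm
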